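/- Let L be a (−1)-class in the del Pezzo lattice of rank 9 (δ = 8). The stabilizer of L in the Weyl group W₈ acts on the set of all (−1)-classes with exactly five orbits (the orbits being distinguished by the value of the intersection number with L, which takes exactly the values −1, 0, 1, 2, 3). -/

import Mathlib

set_option maxRecDepth 100000
set_option maxHeartbeats 1000000


/-- A class in the del Pezzo lattice of rank `1 + δ`: the pair `(a, b)`
represents `a·ℓ − b₁e₁ − ⋯ − b_δ e_δ`. -/
abbrev Cls (δ : ℕ) : Type := ℤ × (Fin δ → ℤ)

/-- The intersection product: `(a;b)·(a';b') = a a' − Σ bᵢ bᵢ'`. -/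
def ip {δ : ℕ} (x y : Cls δ) : ℤ := x.1 * y.1 - ∑ i, x.2 i * y.2 i

/-- The canonical class `K = −3ℓ + e₁ + ⋯ + e_δ`, i.e. `(−3; −1, …, −1)`. -/
def Kcls (δ : ℕ) : Cls δ := (-3, fun _ => -1)

/-- A conic class: `Q·Q = 0` and `K·Q = −2`. -/
def IsConic {δ : ℕ} (Q : Cls δ) : Prop := ip Q Q = 0 ∧ ip (Kcls δ) Q = -2

/-- A `(−1)`-class: `L·L = −1` and `K·L = −1`. -/
def IsMinusOne {δ : ℕ} (L : Cls δ) : Prop := ip L L = -1 ∧ ip (Kcls δ) L = -1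

/-- Membership in the Weyl group `W_δ`: a ℤ-linear automorphism of the lattice
preserving the intersection form and fixing the canonical class. -/
def IsWeyl {δ : ℕ} (g : Cls δ ≃ₗ[ℤ] Cls δ) : Prop :=
  (∀ x y : Cls δ, ip (g x) (g y) = ip x y) ∧ g (Kcls δ) = Kcls δ


namespace DP

lemma ip_comm {δ : ℕ} (x y : Cls δ) : ip x y = ip y x := by
  simp [ip, mul_comm]

lemma ip_add_left {δ : ℕ} (x y z : Cls δ) : ip (x + y) z = ip x z + ip y z := by
  simp [ip, add_mul, Finset.sum_add_distrib]; ring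

lemma ip_add_right {δ : ℕ} (x y z : Cls δ) : ip x (y + z) = ip x y + ip x z := by
  rw [ip_comm, ip_add_left, ip_comm z x, ip_comm y x]

lemma ip_smul_left {δ : ℕ} (c : ℤ) (x y : Cls δ) : ip (c • x) y = c * ip x y := by
  simp only [ip, Prod.smul_fst, Prod.smul_snd, Pi.smul_apply, smul_eq_mul]
  rw [mul_sub, Finset.mul_sum]
  simp only [mul_assoc]

lemma ip_smul_right {δ : ℕ} (c : ℤ) (x y : Cls δ) : ip x (c • y) = c * ip x y := by
  rw [ip_comm, ip_smul_left, ip_comm]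

lemma ip_neg_left {δ : ℕ} (x y : Cls δ) : ip (-x) y = -ip x y := by
  have := ip_smul_left (δ := δ) (-1) x y; simpa using this

lemma ip_neg_right {δ : ℕ} (x y : Cls δ) : ip x (-y) = -ip x y := by
  rw [ip_comm, ip_neg_left, ip_comm]

lemma ip_sub_left {δ : ℕ} (x y z : Cls δ) : ip (x - y) z = ip x z - ip y z := by
  rw [sub_eq_add_neg, ip_add_left, ip_neg_left]; ring

lemma ip_sub_right {δ : ℕ} (x y z : Cls δ) : ip x (y - z) = ip x y - ip x z := by
  rw [ip_comm, ip_sub_left, ip_comm y x, ip_comm z x]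

def IsRoot (t : Cls 8) : Prop := ip t t = -2 ∧ ip (Kcls 8) t = 0

instance : DecidablePred IsRoot := fun t => by unfold IsRoot; infer_instance

/-- reflection map -/
def sigma (t x : Cls 8) : Cls 8 := x + ip x t • t

def rfl_equiv (t : Cls 8) (ht : ip t t = -2) : Cls 8 ≃ₗ[ℤ] Cls 8 where
  toFun x := sigma t x
  invFun x := sigma t x
  map_add' x y := by
    simp only [sigma, ip_add_left, add_smul]; abel
  map_smul' c x := by
    simp only [sigma, ip_smul_left, RingHom.id_apply, smul_add, mul_smul]
  left_inv x := by
    simp only [sigma, ip_add_left, ip_smul_left, ht, add_smul, mul_smul]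
    module
  right_inv x := by
    simp only [sigma, ip_add_left, ip_smul_left, ht, add_smul, mul_smul]
    module

lemma rfl_equiv_apply (t : Cls 8) (ht : ip t t = -2) (x : Cls 8) :
    rfl_equiv t ht x = sigma t x := rfl

lemma rfl_equiv_weyl (t : Cls 8) (ht : IsRoot t) : IsWeyl (rfl_equiv t ht.1) := by
  constructor
  · intro x y
    simp only [rfl_equiv_apply, sigma, ip_add_left, ip_add_right, ip_smul_left, ip_smul_right,
      ht.1]
    rw [ip_comm t y]
    ring
  · simp only [rfl_equiv_apply, sigma, ht.2, zero_smul, add_zero]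

lemma weyl_id : IsWeyl (LinearEquiv.refl ℤ (Cls 8)) := ⟨fun _ _ => rfl, rfl⟩

lemma weyl_trans {g h : Cls 8 ≃ₗ[ℤ] Cls 8} (hg : IsWeyl g) (hh : IsWeyl h) :
    IsWeyl (g.trans h) := by
  constructor
  · intro x y
    simp only [LinearEquiv.trans_apply]
    rw [hh.1, hg.1]
  · simp only [LinearEquiv.trans_apply, hg.2, hh.2]

lemma weyl_symm {g : Cls 8 ≃ₗ[ℤ] Cls 8} (hg : IsWeyl g) : IsWeyl g.symm := by
  constructor
  · intro x y
    conv_rhs => rw [← g.apply_symm_apply x, ← g.apply_symm_apply y, hg.1]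
  · conv_lhs => rw [← hg.2, g.symm_apply_apply]

def applyChain (ts : List (Cls 8)) (x : Cls 8) : Cls 8 :=
  ts.foldl (fun y t => sigma t y) x

lemma chain_weyl (ts : List (Cls 8)) (h : ∀ t ∈ ts, IsRoot t) :
    ∃ g : Cls 8 ≃ₗ[ℤ] Cls 8, IsWeyl g ∧ ∀ x, g x = applyChain ts x := by
  induction ts with
  | nil => exact ⟨LinearEquiv.refl ℤ (Cls 8), weyl_id, fun x => rfl⟩
  | cons t ts ih =>
    have ht : IsRoot t := h t List.mem_cons_self
    obtain ⟨g, hg, hgx⟩ := ih (fun u hu => h u (List.mem_cons_of_mem t hu))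
    refine ⟨(rfl_equiv t ht.1).trans g, weyl_trans (rfl_equiv_weyl t ht) hg, fun x => ?_⟩
    simp only [LinearEquiv.trans_apply, rfl_equiv_apply, hgx, applyChain, List.foldl_cons]

/-- negative semidefiniteness on K-perp -/
lemma negdef (v : Cls 8) (hv : ip (Kcls 8) v = 0) : 8 * ip v v ≤ - v.1 ^ 2 := by
  obtain ⟨a, b⟩ := v
  have hsum : ∑ i, b i = 3 * a := by
    simp only [ip, Kcls, neg_mul, one_mul, Finset.sum_neg_distrib] at hv
    linarith
  have cs := sq_sum_le_card_mul_sum_sq (s := (Finset.univ : Finset (Fin 8))) (f := b)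
  rw [hsum] at cs
  simp only [Finset.card_univ, Fintype.card_fin] at cs
  have hsq : ∑ i, b i * b i = ∑ i, (b i) ^ 2 := by
    refine Finset.sum_congr rfl fun i _ => (sq (b i)).symm ▸ by ring
  simp only [ip]
  rw [hsq]
  push_cast at cs
  nlinarith [cs]

lemma negdef_zero (v : Cls 8) (hv : ip (Kcls 8) v = 0) (hz : ip v v = 0) : v = 0 := by
  have h8 := negdef v hv
  rw [hz] at h8
  have ha : v.1 = 0 := by nlinarith [sq_nonneg v.1]
  have hip : v.1 * v.1 - ∑ i, v.2 i * v.2 i = 0 := hz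
  have hb : ∑ i, v.2 i * v.2 i = 0 := by rw [ha] at hip; linarith
  have hb2 : v.2 = 0 := by
    funext i
    exact mul_self_eq_zero.mp
      (Finset.sum_eq_zero_iff_of_nonneg (fun j _ => mul_self_nonneg (v.2 j)) |>.mp hb i
        (Finset.mem_univ i))
  have : v = (v.1, v.2) := rfl
  rw [this, ha, hb2]
  rfl


def rawRootL : List Nat := [59189240,59189232,59189160,59188512,59182680,59130192,58657800,54406272,107550372,107077980,102826452,107025492,102773964,102301572,107019660,102768132,102295740,102243252,107019012,102767484,102295092,102242604,102236772,107018940,102767412,102295020,102242532,102236700,102236052,107018932,102767404,102295012,102242524,102236692,102236044,102235972,150663432,150662784,150656952,150604464,150132072,145880544,150662712,150656880,150604392,150132000,145880472,150656232,150603744,150131352,145879824,150597912,150125520,145873992,150073032,145821504,145349112,150662704,150656872,150604384,150131992,145880464,150656224,150603736,150131344,145879816,150597904,150125512,145873984,150073024,145821496,145349104,150656152,150603664,150131272,145879744,150597832,150125440,145873912,150072952,145821424,145349032,150597184,150124792,145873264,150072304,145820776,145348384,150066472,145814944,145342552,145290064,198493212,194241684,193769292,193716804,193710972,193710324,1937102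52,198493204,194241676,193769284,193716796,193710964,193710316,198493132,194241604,193769212,193716724,193710892,198492484,194240956,193768564,193716076,198486652,194235124,193762732,198434164,194182636,197961772,189458716,193237852,188986324,193657756,193185364,188933836,193704412,193651924,193179532,188928004,193709596,193703764,193651276,193178884,188927356,193710172,193709524,193703692,193651204,193178812,188927284,193710236,193710164,193709516,193703684,193651196,193178804,188927276,242130424,242077936,241605544,237354016,242072104,241599712,237348184,241547224,237295696,236823304,242071456,241599064,237347536,241546576,237295048,236822656,241540744,237289216,236816824,236764336,242071384,241598992,237347464,241546504,237294976,236822584,241540672,237289144,236816752,236764264,241540024,237288496,236816104,236763616,236757784,242071376,241598984,237347456,241546496,237294968,236822576,241540664,237289136,236816744,236764256,241540016,237288488,236816096,236763608,236757776,241539944,237288416,236816024,236763536,236757704,236757056,285184516,285184444,285183796,285177964,285125476,284653084,280401556,285184436,285183788,285177956,285125468,284653076,280401548,285183716,285177884,285125396,284653004,280401476,285177236,285124748,284652356,280400828,285118916,284646524,280394996,284594036,280342508,279870116,333014216,328762688,328290296,328237808,328231976,328231328,328231256,328231248]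

def rawChains1 : List (List Nat) := [[193710252,59189240],[59189240],[193710316,59189240],[193710964,59189240],[193716796,59189240],[193769284,59189240],[194241676,59189240],[198493204,59189240],[145349104,59189240],[145821496,59189240],[150073024,59189240],[145873984,59189240],[150125512,59189240],[150597904,59189240],[145879816,59189240],[150131344,59189240],[150603736,59189240],[150656224,59189240],[145880464,59189240],[150131992,59189240],[150604384,59189240],[150656872,59189240],[150662704,59189240],[193710252,107018940],[193710252,102767412],[193710252,102295020],[193710252,102242532],[193710252,102236700],[193710252,102236052],[107018940],[102767412],[102295020],[102242532],[102236700],[102236052],[198493204,107018940],[102236044,59189240],[102236692,59189240],[102242524,59189240],[102295012,59189240],[102767404,59189240],[107018932,59189240],[193710252,150662712],[193710252,150656880],[193710252,150604392],[193710252,150132000],[193710252,145880472],[193710252,150656232],[193710252,150603744],[193710252,150131352],[193710252,145879824],[193710252,150597912],[193710252,150125520],[193710252,145873992],[193710252,150073032],[193710252,145821504],[193710252,145349112],[150662712],[150656880],[150604392],[150132000],[145880472],[150656232],[150603744],[150131352],[145879824],[150597912],[150125520],[145873992],[150073032],[145821504],[145349112],[150073024,107018940],[150125512,107018940],[1505979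04,107018940],[150597904,102767412],[150131344,107018940],[150603736,107018940],[150603736,102767412],[150656224,107018940],[150656224,102767412],[150656224,102295020],[150131992,107018940],[150604384,107018940],[150604384,102767412],[150656872,107018940],[150656872,102767412],[150656872,102295020],[150662704,107018940],[150662704,102767412],[150662704,102295020],[150662704,102242532],[193710252,198493212],[193710252,194241684],[193710252,193769292],[193710252,193716804],[193710252,193710972],[193710252,193710324],[193710252],[198493212],[194241684],[193769292],[193716804],[193710972],[193710324],[102236044,107018940],[102236044,102767412],[102236044,102295020],[102236044,102242532],[102236044,102236700],[102236692,107018940],[102236692,102767412],[102236692,102295020],[102236692,102242532],[102242524,107018940],[102242524,102767412],[102242524,102295020],[102295012,107018940],[102295012,102767412],[102767404,107018940],[107018932,102767412],[102767404,102295020],[107018932,102295020],[102295012,102242532],[102767404,102242532],[107018932,102242532],[102242524,102236700],[102295012,102236700],[102767404,102236700],[107018932,102236700],[102236692,102236052],[102242524,102236052],[102295012,102236052],[102767404,102236052],[107018932,102236052],[193710316,193710324],[193710964,193710972],[193716796,193716804],[193769284,193769292],[194241676,194241684],[198493204,198493212],[],[193710316],[193710964],[193716796],[193769284],[194241676],[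198493204],[150662712,102242524],[150662712,102295012],[150662712,102767404],[150662712,107018932],[150656880,102295012],[150656880,102767404],[150656880,107018932],[150604392,102767404],[150604392,107018932],[150132000,107018932],[150656232,102295012],[150656232,102767404],[150656232,107018932],[150603744,102767404],[150603744,107018932],[150131352,107018932],[150597912,102767404],[150597912,107018932],[150125520,107018932],[150073032,107018932],[145349104,145349112],[145821496,145821504],[150073024,150073032],[145873984,145873992],[150125512,150125520],[150597904,150597912],[145879816,145879824],[150131344,150131352],[150603736,150603744],[150656224,150656232],[145880464,145880472],[150131992,150132000],[150604384,150604392],[150656872,150656880],[150662704,150662712],[145349104],[145821496],[150073024],[145873984],[150125512],[150597904],[145879816],[150131344],[150603736],[150656224],[145880464],[150131992],[150604384],[150656872],[150662704],[107018940,59189232],[102767412,59189232],[102295020,59189232],[102242532,59189232],[102236700,59189232],[102236052,59189232],[198493212,107018932],[102236044,102236052],[102236692,102236700],[102242524,102242532],[102295012,102295020],[102767404,102767412],[107018932,107018940],[102236044],[102236692],[102242524],[102295012],[102767404],[107018932],[150662712,59189232],[150656880,59189232],[150604392,59189232],[150132000,59189232],[145880472,59189232],[150656232,59189232],[150603744,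59189232],[150131352,59189232],[145879824,59189232],[150597912,59189232],[150125520,59189232],[145873992,59189232],[150073032,59189232],[145821504,59189232],[145349112,59189232],[198493212,59189232],[194241684,59189232],[193769292,59189232],[193716804,59189232],[193710972,59189232],[193710324,59189232],[59189232,59189240],[59189232]]

def rawRoots2_m1 : List Nat := [59189232,107018932,102767404,102295012,102242524,102236692,102236044,150662704,150656872,150604384,150131992,145880464,150656224,150603736,150131344,145879816,150597904,150125512,145873984,150073024,145821496,145349104,198493204,194241676,193769284,193716796,193710964,193710316,193710164,193709516,193703684,193651196,193178804,188927276,242071376,241598984,237347456,241546496,237294968,236822576,241540664,237289136,236816744,236764256,241540016,237288488,236816096,236763608,236757776,285184436,285183788,285177956,285125468,284653076,280401548,328231248]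

def rawChains2_m1 : List (List Nat) := [[],[145880544],[150132072],[150604464],[150656952],[150662784],[150663432],[102236772],[102242604],[102295092],[102767484],[107019012],[102243252],[102295740],[102768132],[107019660],[102301572],[102773964],[107025492],[102826452],[107077980],[107550372],[54406272],[58657800],[59130192],[59182680],[59188512],[59189160],[145880544,107019012],[145880544,107019660],[145880544,107025492],[145880544,107077980],[145880544,107550372],[150132072,107550372],[145880544,58657800],[145880544,59130192],[150132072,59130192],[145880544,59182680],[150132072,59182680],[150604464,59182680],[145880544,59188512],[150132072,59188512],[150604464,59188512],[150656952,59188512],[145880544,59189160],[150132072,59189160],[150604464,59189160],[150656952,59189160],[150662784,59189160],[102236772,59188512],[102236772,59189160],[102242604,59189160],[102295092,59189160],[102767484,59189160],[107019012,59189160],[145880544,107019012,59189160]]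

def rawBase_m1 : Nat := 59189232

def rawRoots2_z0 : List Nat := [59189160,59188512,59182680,59130192,58657800,54406272,107550372,107077980,102826452,107025492,102773964,102301572,107019660,102768132,102295740,102243252,107019012,102767484,102295092,102242604,102236772,102235972,150663432,150662784,150656952,150604464,150132072,145880544,150656152,150603664,150131272,145879744,150597832,150125440,145873912,150072952,145821424,145349032,150597184,150124792,145873264,150072304,145820776,145348384,150066472,145814944,145342552,145290064,198493132,194241604,193769212,193716724,193710892,198492484,194240956,193768564,193716076,198486652,194235124,193762732,198434164,194182636,197961772,189458716,193237852,188986324,193657756,193185364,188933836,193704412,193651924,193179532,188928004,193709596,193703764,193651276,193178884,188927356,242130424,242077936,241605544,237354016,242072104,241599712,237348184,241547224,237295696,236823304,242071456,241599064,237347536,241546576,237295048,236822656,241540744,237289216,236816824,236764336,241539944,237288416,236816024,236763536,236757704,236757056,285184516,285183716,285177884,285125396,284653004,280401476,285177236,285124748,284652356,280400828,285118916,284646524,280394996,284594036,280342508,279870116,333014216,328762688,328290296,328237808,328231976,328231328]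

def rawChains2_z0 : List (List Nat) := [[],[193710892],[193716724],[193769212],[194241604],[198493132],[145349032],[145821424],[150072952],[145873912],[150125440],[150597832],[145879744],[150131272],[150603664],[150656152],[193710892,145879744],[193710892,150131272],[193710892,150603664],[193710892,150656152],[193716724,150656152],[150663432],[102235972],[193710892,102235972],[193716724,102235972],[193769212,102235972],[194241604,102235972],[198493132,102235972],[102243252],[102295740],[102768132],[107019660],[102301572],[102773964],[107025492],[102826452],[107077980],[107550372],[193710892,102301572],[193710892,102773964],[193710892,107025492],[193710892,102826452],[193710892,107077980],[193710892,107550372],[193716724,102826452],[193716724,107077980],[193716724,107550372],[193769212,107550372],[54406272],[58657800],[59130192],[59182680],[59188512],[193710892,54406272],[193710892,58657800],[193710892,59130192],[193710892,59182680],[193716724,54406272],[193716724,58657800],[193716724,59130192],[193769212,54406272],[193769212,58657800],[194241604,54406272],[198493132,58657800],[194241604,59130192],[198493132,59130192],[193769212,59182680],[194241604,59182680],[198493132,59182680],[193716724,59188512],[193769212,59188512],[194241604,59188512],[198493132,59188512],[59188512,59189160],[59182680,59189160],[59130192,59189160],[58657800,59189160],[54406272,59189160],[145349032,59130192],[1453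49032,59182680],[145821424,59182680],[150072952,59182680],[145349032,59188512],[145821424,59188512],[150072952,59188512],[145873912,59188512],[150125440,59188512],[150597832,59188512],[107550372,59189160],[107077980,59189160],[102826452,59189160],[107025492,59189160],[102773964,59189160],[102301572,59189160],[107019660,59189160],[102768132,59189160],[102295740,59189160],[102243252,59189160],[150663432,54406272],[150663432,58657800],[150663432,59130192],[150663432,59182680],[150663432,59188512],[102235972,59189160],[150663432,59189160],[102243252,59182680],[102243252,59188512],[102295740,59188512],[102768132,59188512],[107019660,59188512],[150656152,59189160],[150603664,59189160],[150131272,59189160],[145879744,59189160],[150597832,59189160],[150125440,59189160],[145873912,59189160],[150072952,59189160],[145821424,59189160],[145349032,59189160],[198493132,59189160],[194241604,59189160],[193769212,59189160],[193716724,59189160],[193710892,59189160],[59189160]]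

def rawBase_z0 : Nat := 59189160

def rawRoots2_p1 : List Nat := [59189240,107018940,102767412,102295020,102242532,102236700,102236052,150662712,150656880,150604392,150132000,145880472,150656232,150603744,150131352,145879824,150597912,150125520,145873992,150073032,145821504,145349112,198493212,194241684,193769292,193716804,193710972,193710324,193710172,193709524,193703692,193651204,193178812,188927284,242071384,241598992,237347464,241546504,237294976,236822584,241540672,237289144,236816752,236764264,241540024,237288496,236816104,236763616,236757784,285184444,285183796,285177964,285125476,284653084,280401556,328231256]

def rawChains2_p1 : List (List Nat) := [[],[145880544],[150132072],[150604464],[150656952],[150662784],[150663432],[102236772],[102242604],[102295092],[102767484],[107019012],[102243252],[102295740],[102768132],[107019660],[102301572],[102773964],[107025492],[102826452],[107077980],[107550372],[54406272],[58657800],[59130192],[59182680],[59188512],[59189160],[145880544,107019012],[145880544,107019660],[145880544,107025492],[145880544,107077980],[145880544,107550372],[150132072,107550372],[145880544,58657800],[145880544,59130192],[150132072,59130192],[145880544,59182680],[150132072,59182680],[150604464,59182680],[145880544,59188512],[150132072,59188512],[150604464,59188512],[150656952,59188512],[145880544,59189160],[150132072,59189160],[150604464,59189160],[150656952,59189160]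,[150662784,59189160],[102236772,59188512],[102236772,59189160],[102242604,59189160],[102295092,59189160],[102767484,59189160],[107019012,59189160],[145880544,107019012,59189160]]

def rawBase_p1 : Nat := 59189240

def rawR0 : Nat := 193710236


def dec (n : ℕ) : Cls 8 :=
  (((n / 9^8 % 9 : ℕ) : ℤ) - 4, fun i => ((n / 9^(i:ℕ) % 9 : ℕ) : ℤ) - 4)

def rootL : List (Cls 8) := rawRootL.map dec
def chains1 : List (List (Cls 8)) := rawChains1.map (List.map dec)
def r0 : Cls 8 := dec rawR0

lemma stage1_check : ∀ i : Fin 240,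
    (∀ u ∈ chains1.getD i [], IsRoot u) ∧
    applyChain (chains1.getD i []) (rootL.getD i 0) = r0 := by decide

-- appended to DP namespace context for testing
section Classify
open Finset

lemma cls0 : ∀ i j : Fin 8, i ≠ j →
    (((0:ℤ), fun m => if m = i then (1:ℤ) else if m = j then -1 else 0) : Cls 8) ∈ rootL := by
  decide

lemma cls1 : ∀ S : Finset (Fin 8), S.card = 3 →
    (((1:ℤ), fun m => if m ∈ S then (1:ℤ) else 0) : Cls 8) ∈ rootL := by decide

lemma cls2 : ∀ S : Finset (Fin 8), S.card = 6 →
    (((2:ℤ), fun m => if m ∈ S then (1:ℤ) else 0) : Cls 8) ∈ rootL := by decide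

lemma cls3 : ∀ i : Fin 8,
    (((3:ℤ), fun m => if m = i then (2:ℤ) else 1) : Cls 8) ∈ rootL := by decide

lemma clsm1 : ∀ S : Finset (Fin 8), S.card = 3 →
    (((-1:ℤ), fun m => if m ∈ S then (-1:ℤ) else 0) : Cls 8) ∈ rootL := by decide

lemma clsm2 : ∀ S : Finset (Fin 8), S.card = 6 →
    (((-2:ℤ), fun m => if m ∈ S then (-1:ℤ) else 0) : Cls 8) ∈ rootL := by decide

lemma clsm3 : ∀ i : Fin 8,
    (((-3:ℤ), fun m => if m = i then (-2:ℤ) else -1) : Cls 8) ∈ rootL := by decide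

lemma classify (t : Cls 8) (ht : IsRoot t) : t ∈ rootL := by
  obtain ⟨a, b⟩ := t
  obtain ⟨h1, h2⟩ := ht
  have hip : a * a - ∑ i, b i * b i = -2 := h1
  have hsum : ∑ i, b i = 3 * a := by
    have h2' : -3 * a - ∑ i, (-1) * b i = 0 := h2
    have : ∑ i, (-1) * b i = -∑ i, b i := by
      rw [← Finset.sum_neg_distrib]
      exact Finset.sum_congr rfl fun i _ => by ring
    rw [this] at h2'
    linarith
  have hS2 : ∑ i, (b i) ^ 2 = a ^ 2 + 2 := by
    have : ∑ i, (b i) ^ 2 = ∑ i, b i * b i :=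
      Finset.sum_congr rfl fun i _ => sq (b i)
    rw [this]
    nlinarith [hip]
  have hcs : ∀ i, 4 * (b i) ^ 2 - 3 * a * (b i) + a ^ 2 - 7 ≤ 0 := by
    intro i
    have e1 : ∑ j ∈ univ.erase i, b j = 3 * a - b i := by
      rw [Finset.sum_erase_eq_sub (mem_univ i), hsum]
    have e2 : ∑ j ∈ univ.erase i, (b j) ^ 2 = a ^ 2 + 2 - (b i) ^ 2 := by
      rw [Finset.sum_erase_eq_sub (mem_univ i), hS2]
    have cs := sq_sum_le_card_mul_sum_sq (s := univ.erase i) (f := b)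
    rw [e1, e2] at cs
    have hcard : (univ.erase i).card = 7 := by
      rw [Finset.card_erase_of_mem (mem_univ i)]
      simp
    rw [hcard] at cs
    push_cast at cs
    nlinarith [cs]
  have cs0 := sq_sum_le_card_mul_sum_sq (s := (univ : Finset (Fin 8))) (f := b)
  rw [hsum, hS2] at cs0
  simp only [card_univ, Fintype.card_fin] at cs0
  push_cast at cs0
  have ha1 : -4 ≤ a := by nlinarith [cs0]
  have ha2 : a ≤ 4 := by nlinarith [cs0]
  interval_cases a
  -- a = -4
  · exfalso
    have hq : 4 * (b 0) ^ 2 + 12 * (b 0) + 9 ≤ 0 := by have := hcs 0; linarith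
    have h2q : (2 * b 0 + 3) ^ 2 = 0 := by nlinarith [sq_nonneg (2 * b 0 + 3)]
    have := sq_eq_zero_iff.mp h2q
    omega
  -- a = -3
  · have hb : ∀ i, b i = -2 ∨ b i = -1 := by
      intro i
      have h := hcs i
      have l1 : -2 ≤ b i := by nlinarith [sq_nonneg (b i + 3)]
      have l2 : b i ≤ -1 := by nlinarith [sq_nonneg (b i)]
      omega
    have hsum2 : ∑ i, b i = ∑ i, (-1 - (if b i = -2 then (1:ℤ) else 0)) :=
      Finset.sum_congr rfl fun i _ => by rcases hb i with h | h <;> simp [h]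
    rw [Finset.sum_sub_distrib, Finset.sum_boole] at hsum2
    simp only [Finset.sum_const, card_univ, Fintype.card_fin, nsmul_eq_mul] at hsum2
    push_cast at hsum2
    rw [hsum2] at hsum
    have hcard : (univ.filter (fun m => b m = -2)).card = 1 := by omega
    obtain ⟨i, hi⟩ := Finset.card_eq_one.mp hcard
    have hbeq : b = fun m => if m = i then (-2:ℤ) else -1 := by
      funext m
      by_cases hm : m = i
      · subst hm
        have : m ∈ (univ.filter (fun m => b m = -2)) := hi ▸ Finset.mem_singleton_self m
        rw [Finset.mem_filter] at this
        simp [this.2]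
      · have hmT : m ∉ (univ.filter (fun m => b m = -2)) := fun hc => hm (by rwa [hi, Finset.mem_singleton] at hc)
        rw [Finset.mem_filter] at hmT
        rcases hb m with h | h
        · exact absurd ⟨mem_univ m, h⟩ hmT
        · simp [hm, h]
    rw [hbeq]
    exact clsm3 i
  -- a = -2
  · have hb : ∀ i, b i = -1 ∨ b i = 0 := by
      intro i
      have h := hcs i
      have l1 : -1 ≤ b i := by nlinarith [sq_nonneg (b i + 2)]
      have l2 : b i ≤ 0 := by nlinarith [sq_nonneg (b i - 1)]
      omega
    have hsum2 : ∑ i, b i = ∑ i, (0 - (if b i = -1 then (1:ℤ) else 0)) :=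
      Finset.sum_congr rfl fun i _ => by rcases hb i with h | h <;> simp [h]
    rw [Finset.sum_sub_distrib, Finset.sum_boole] at hsum2
    simp only [Finset.sum_const, card_univ, Fintype.card_fin, nsmul_eq_mul] at hsum2
    push_cast at hsum2
    rw [hsum2] at hsum
    have hcard : (univ.filter (fun m => b m = -1)).card = 6 := by omega
    have hbeq : b = fun m => if m ∈ (univ.filter (fun m => b m = -1)) then (-1:ℤ) else 0 := by
      funext m
      by_cases hm : b m = -1
      · simp [Finset.mem_filter, hm]
      · have h0 : b m = 0 := by
          rcases hb m with h | h
          · exact absurd h hm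
          · exact h
        simp [Finset.mem_filter, hm, h0]
    rw [hbeq]
    exact clsm2 (univ.filter (fun m => b m = -1)) hcard
  -- a = -1
  · have hb : ∀ i, b i = -1 ∨ b i = 0 := by
      intro i
      have h := hcs i
      have l1 : -1 ≤ b i := by nlinarith [sq_nonneg (b i + 2)]
      have l2 : b i ≤ 0 := by nlinarith [sq_nonneg (b i - 1)]
      omega
    have hsum2 : ∑ i, b i = ∑ i, (0 - (if b i = -1 then (1:ℤ) else 0)) :=
      Finset.sum_congr rfl fun i _ => by rcases hb i with h | h <;> simp [h]
    rw [Finset.sum_sub_distrib, Finset.sum_boole] at hsum2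
    simp only [Finset.sum_const, card_univ, Fintype.card_fin, nsmul_eq_mul] at hsum2
    push_cast at hsum2
    rw [hsum2] at hsum
    have hcard : (univ.filter (fun m => b m = -1)).card = 3 := by omega
    have hbeq : b = fun m => if m ∈ (univ.filter (fun m => b m = -1)) then (-1:ℤ) else 0 := by
      funext m
      by_cases hm : b m = -1
      · simp [Finset.mem_filter, hm]
      · have h0 : b m = 0 := by
          rcases hb m with h | h
          · exact absurd h hm
          · exact h
        simp [Finset.mem_filter, hm, h0]
    rw [hbeq]
    exact clsm1 (univ.filter (fun m => b m = -1)) hcard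
  -- a = 0
  · have hb : ∀ i, b i = -1 ∨ b i = 0 ∨ b i = 1 := by
      intro i
      have h := hcs i
      have l1 : -1 ≤ b i := by nlinarith [sq_nonneg (b i + 2)]
      have l2 : b i ≤ 1 := by nlinarith [sq_nonneg (b i - 2)]
      omega
    have hsum2 : ∑ i, b i =
        ∑ i, ((if b i = 1 then (1:ℤ) else 0) - (if b i = -1 then 1 else 0)) :=
      Finset.sum_congr rfl fun i _ => by rcases hb i with h | h | h <;> simp [h]
    have hsq2 : ∑ i, (b i) ^ 2 =
        ∑ i, ((if b i = 1 then (1:ℤ) else 0) + (if b i = -1 then 1 else 0)) :=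
      Finset.sum_congr rfl fun i _ => by rcases hb i with h | h | h <;> norm_num [h]
    rw [Finset.sum_sub_distrib, Finset.sum_boole, Finset.sum_boole] at hsum2
    rw [Finset.sum_add_distrib, Finset.sum_boole, Finset.sum_boole] at hsq2
    rw [hsum2] at hsum
    rw [hsq2] at hS2
    have hPc : (univ.filter (fun m => b m = 1)).card = 1 := by omega
    have hNc : (univ.filter (fun m => b m = -1)).card = 1 := by omega
    obtain ⟨i, hi⟩ := Finset.card_eq_one.mp hPc
    obtain ⟨j, hj⟩ := Finset.card_eq_one.mp hNc
    have hbi : b i = 1 := by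
      have : i ∈ (univ.filter (fun m => b m = 1)) := hi ▸ Finset.mem_singleton_self i
      rw [Finset.mem_filter] at this
      exact this.2
    have hbj : b j = -1 := by
      have : j ∈ (univ.filter (fun m => b m = -1)) := hj ▸ Finset.mem_singleton_self j
      rw [Finset.mem_filter] at this
      exact this.2
    have hij : i ≠ j := fun h => by rw [h, hbj] at hbi; omega
    have hbeq : b = fun m => if m = i then (1:ℤ) else if m = j then -1 else 0 := by
      funext m
      by_cases hmi : m = i
      · subst hmi; simp [hbi]
      · by_cases hmj : m = j
        · subst hmj; simp [hmi, hbj]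
        · have hmP : m ∉ (univ.filter (fun m => b m = 1)) := fun hc => hmi (by rwa [hi, Finset.mem_singleton] at hc)
          have hmN : m ∉ (univ.filter (fun m => b m = -1)) := fun hc => hmj (by rwa [hj, Finset.mem_singleton] at hc)
          rw [Finset.mem_filter] at hmP
          rw [Finset.mem_filter] at hmN
          rcases hb m with h | h | h
          · exact absurd ⟨mem_univ m, h⟩ hmN
          · simp [hmi, hmj, h]
          · exact absurd ⟨mem_univ m, h⟩ hmP
    rw [hbeq]
    exact cls0 i j hij
  -- a = 1
  · have hb : ∀ i, b i = 0 ∨ b i = 1 := by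
      intro i
      have h := hcs i
      have l1 : 0 ≤ b i := by nlinarith [sq_nonneg (b i + 1)]
      have l2 : b i ≤ 1 := by nlinarith [sq_nonneg (b i - 2)]
      omega
    have hsum2 : ∑ i, b i = ∑ i, (0 + (if b i = 1 then (1:ℤ) else 0)) :=
      Finset.sum_congr rfl fun i _ => by rcases hb i with h | h <;> simp [h]
    rw [Finset.sum_add_distrib, Finset.sum_boole] at hsum2
    simp only [Finset.sum_const, card_univ, Fintype.card_fin, nsmul_eq_mul] at hsum2
    push_cast at hsum2
    rw [hsum2] at hsum
    have hcard : (univ.filter (fun m => b m = 1)).card = 3 := by omega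
    have hbeq : b = fun m => if m ∈ (univ.filter (fun m => b m = 1)) then (1:ℤ) else 0 := by
      funext m
      by_cases hm : b m = 1
      · simp [Finset.mem_filter, hm]
      · have h0 : b m = 0 := by
          rcases hb m with h | h
          · exact h
          · exact absurd h hm
        simp [Finset.mem_filter, hm, h0]
    rw [hbeq]
    exact cls1 (univ.filter (fun m => b m = 1)) hcard
  -- a = 2
  · have hb : ∀ i, b i = 0 ∨ b i = 1 := by
      intro i
      have h := hcs i
      have l1 : 0 ≤ b i := by nlinarith [sq_nonneg (b i + 1)]
      have l2 : b i ≤ 1 := by nlinarith [sq_nonneg (b i - 2)]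
      omega
    have hsum2 : ∑ i, b i = ∑ i, (0 + (if b i = 1 then (1:ℤ) else 0)) :=
      Finset.sum_congr rfl fun i _ => by rcases hb i with h | h <;> simp [h]
    rw [Finset.sum_add_distrib, Finset.sum_boole] at hsum2
    simp only [Finset.sum_const, card_univ, Fintype.card_fin, nsmul_eq_mul] at hsum2
    push_cast at hsum2
    rw [hsum2] at hsum
    have hcard : (univ.filter (fun m => b m = 1)).card = 6 := by omega
    have hbeq : b = fun m => if m ∈ (univ.filter (fun m => b m = 1)) then (1:ℤ) else 0 := by
      funext m
      by_cases hm : b m = 1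
      · simp [Finset.mem_filter, hm]
      · have h0 : b m = 0 := by
          rcases hb m with h | h
          · exact h
          · exact absurd h hm
        simp [Finset.mem_filter, hm, h0]
    rw [hbeq]
    exact cls2 (univ.filter (fun m => b m = 1)) hcard
  -- a = 3
  · have hb : ∀ i, b i = 1 ∨ b i = 2 := by
      intro i
      have h := hcs i
      have l1 : 1 ≤ b i := by nlinarith [sq_nonneg (b i)]
      have l2 : b i ≤ 2 := by nlinarith [sq_nonneg (b i - 3)]
      omega
    have hsum2 : ∑ i, b i = ∑ i, (1 + (if b i = 2 then (1:ℤ) else 0)) :=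
      Finset.sum_congr rfl fun i _ => by rcases hb i with h | h <;> simp [h]
    rw [Finset.sum_add_distrib, Finset.sum_boole] at hsum2
    simp only [Finset.sum_const, card_univ, Fintype.card_fin, nsmul_eq_mul] at hsum2
    push_cast at hsum2
    rw [hsum2] at hsum
    have hcard : (univ.filter (fun m => b m = 2)).card = 1 := by omega
    obtain ⟨i, hi⟩ := Finset.card_eq_one.mp hcard
    have hbeq : b = fun m => if m = i then (2:ℤ) else 1 := by
      funext m
      by_cases hm : m = i
      · subst hm
        have : m ∈ (univ.filter (fun m => b m = 2)) := hi ▸ Finset.mem_singleton_self m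
        rw [Finset.mem_filter] at this
        simp [this.2]
      · have hmT : m ∉ (univ.filter (fun m => b m = 2)) := fun hc => hm (by rwa [hi, Finset.mem_singleton] at hc)
        rw [Finset.mem_filter] at hmT
        rcases hb m with h | h
        · simp [hm, h]
        · exact absurd ⟨mem_univ m, h⟩ hmT
    rw [hbeq]
    exact cls3 i
  -- a = 4
  · exfalso
    have hq : 4 * (b 0) ^ 2 - 12 * (b 0) + 9 ≤ 0 := by have := hcs 0; linarith
    have h2q : (2 * b 0 - 3) ^ 2 = 0 := by nlinarith [sq_nonneg (2 * b 0 - 3)]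
    have := sq_eq_zero_iff.mp h2q
    omega

end Classify

section Glue
open Finset

def roots2_m1 : List (Cls 8) := rawRoots2_m1.map dec
def chains2_m1 : List (List (Cls 8)) := rawChains2_m1.map (List.map dec)
def base_m1 : Cls 8 := dec rawBase_m1
def roots2_z0 : List (Cls 8) := rawRoots2_z0.map dec
def chains2_z0 : List (List (Cls 8)) := rawChains2_z0.map (List.map dec)
def base_z0 : Cls 8 := dec rawBase_z0
def roots2_p1 : List (Cls 8) := rawRoots2_p1.map dec
def chains2_p1 : List (List (Cls 8)) := rawChains2_p1.map (List.map dec)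
def base_p1 : Cls 8 := dec rawBase_p1

set_option maxRecDepth 100000 in
lemma stage2_check_m1 : ∀ i : Fin 56,
    (∀ u ∈ chains2_m1.getD i [], IsRoot u) ∧
    applyChain (chains2_m1.getD i []) (roots2_m1.getD i 0) = base_m1 ∧
    applyChain (chains2_m1.getD i []) r0 = r0 := by decide

set_option maxRecDepth 100000 in
lemma stage2_check_z0 : ∀ i : Fin 126,
    (∀ u ∈ chains2_z0.getD i [], IsRoot u) ∧
    applyChain (chains2_z0.getD i []) (roots2_z0.getD i 0) = base_z0 ∧
    applyChain (chains2_z0.getD i []) r0 = r0 := by decide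

set_option maxRecDepth 100000 in
lemma stage2_check_p1 : ∀ i : Fin 56,
    (∀ u ∈ chains2_p1.getD i [], IsRoot u) ∧
    applyChain (chains2_p1.getD i []) (roots2_p1.getD i 0) = base_p1 ∧
    applyChain (chains2_p1.getD i []) r0 = r0 := by decide

set_option maxRecDepth 100000 in
lemma mem2_m1 : ∀ t ∈ rootL, ip t r0 = -1 → t ∈ roots2_m1 := by decide
set_option maxRecDepth 100000 in
lemma mem2_z0 : ∀ t ∈ rootL, ip t r0 = 0 → t ∈ roots2_z0 := by decide
set_option maxRecDepth 100000 in
lemma mem2_p1 : ∀ t ∈ rootL, ip t r0 = 1 → t ∈ roots2_p1 := by decide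

lemma base_ip : ip base_m1 r0 = -1 ∧ ip base_z0 r0 = 0 ∧ ip base_p1 r0 = 1 := by decide

lemma mem_getD {α : Type*} (l : List α) (d : α) {t : α} (h : t ∈ l) :
    ∃ i : ℕ, i < l.length ∧ l.getD i d = t := by
  obtain ⟨i, hi, he⟩ := List.mem_iff_getElem.mp h
  exact ⟨i, hi, by rw [List.getD_eq_getElem l d hi]; exact he⟩

/-- Stage 1: the Weyl group is transitive on roots. -/
theorem trans_root (t : Cls 8) (ht : IsRoot t) :
    ∃ g : Cls 8 ≃ₗ[ℤ] Cls 8, IsWeyl g ∧ g t = r0 := by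
  obtain ⟨i, hi, he⟩ := mem_getD rootL 0 (classify t ht)
  have hlen : rootL.length = 240 := by decide
  rw [hlen] at hi
  have hchk := stage1_check ⟨i, hi⟩
  obtain ⟨g, hg, hgx⟩ := chain_weyl _ hchk.1
  refine ⟨g, hg, ?_⟩
  rw [hgx, ← he]
  exact hchk.2

/-- Stage 2: the stabilizer of r0 moves any root with given product with r0 to the base point. -/
theorem stab_m1 (s : Cls 8) (hs : IsRoot s) (hc : ip s r0 = -1) :
    ∃ g : Cls 8 ≃ₗ[ℤ] Cls 8, IsWeyl g ∧ g r0 = r0 ∧ g s = base_m1 := by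
  obtain ⟨i, hi, he⟩ := mem_getD roots2_m1 0 (mem2_m1 s (classify s hs) hc)
  have hlen : roots2_m1.length = 56 := by decide
  rw [hlen] at hi
  have hchk := stage2_check_m1 ⟨i, hi⟩
  obtain ⟨g, hg, hgx⟩ := chain_weyl _ hchk.1
  exact ⟨g, hg, by rw [hgx]; exact hchk.2.2, by rw [hgx, ← he]; exact hchk.2.1⟩

theorem stab_z0 (s : Cls 8) (hs : IsRoot s) (hc : ip s r0 = 0) :
    ∃ g : Cls 8 ≃ₗ[ℤ] Cls 8, IsWeyl g ∧ g r0 = r0 ∧ g s = base_z0 := by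
  obtain ⟨i, hi, he⟩ := mem_getD roots2_z0 0 (mem2_z0 s (classify s hs) hc)
  have hlen : roots2_z0.length = 126 := by decide
  rw [hlen] at hi
  have hchk := stage2_check_z0 ⟨i, hi⟩
  obtain ⟨g, hg, hgx⟩ := chain_weyl _ hchk.1
  exact ⟨g, hg, by rw [hgx]; exact hchk.2.2, by rw [hgx, ← he]; exact hchk.2.1⟩

theorem stab_p1 (s : Cls 8) (hs : IsRoot s) (hc : ip s r0 = 1) :
    ∃ g : Cls 8 ≃ₗ[ℤ] Cls 8, IsWeyl g ∧ g r0 = r0 ∧ g s = base_p1 := by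
  obtain ⟨i, hi, he⟩ := mem_getD roots2_p1 0 (mem2_p1 s (classify s hs) hc)
  have hlen : roots2_p1.length = 56 := by decide
  rw [hlen] at hi
  have hchk := stage2_check_p1 ⟨i, hi⟩
  obtain ⟨g, hg, hgx⟩ := chain_weyl _ hchk.1
  exact ⟨g, hg, by rw [hgx]; exact hchk.2.2, by rw [hgx, ← he]; exact hchk.2.1⟩

/-- combined stage 2 -/
theorem stab_trans (c : ℤ) (hc : c = -1 ∨ c = 0 ∨ c = 1) (s s' : Cls 8)
    (hs : IsRoot s) (hs' : IsRoot s') (h1 : ip s r0 = c) (h2 : ip s' r0 = c) :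
    ∃ g : Cls 8 ≃ₗ[ℤ] Cls 8, IsWeyl g ∧ g r0 = r0 ∧ g s = s' := by
  have key : ∀ b : Cls 8,
      (∃ g1 : Cls 8 ≃ₗ[ℤ] Cls 8, IsWeyl g1 ∧ g1 r0 = r0 ∧ g1 s = b) →
      (∃ g2 : Cls 8 ≃ₗ[ℤ] Cls 8, IsWeyl g2 ∧ g2 r0 = r0 ∧ g2 s' = b) →
      ∃ g : Cls 8 ≃ₗ[ℤ] Cls 8, IsWeyl g ∧ g r0 = r0 ∧ g s = s' := by
    rintro b ⟨g1, hw1, hr1, hv1⟩ ⟨g2, hw2, hr2, hv2⟩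
    refine ⟨g1.trans g2.symm, weyl_trans hw1 (weyl_symm hw2), ?_, ?_⟩
    · simp only [LinearEquiv.trans_apply, hr1]
      exact (LinearEquiv.symm_apply_eq g2).mpr hr2.symm
    · simp only [LinearEquiv.trans_apply, hv1]
      exact (LinearEquiv.symm_apply_eq g2).mpr hv2.symm
  rcases hc with rfl | rfl | rfl
  · exact key base_m1 (stab_m1 s hs h1) (stab_m1 s' hs' h2)
  · exact key base_z0 (stab_z0 s hs h1) (stab_z0 s' hs' h2)
  · exact key base_p1 (stab_p1 s hs h1) (stab_p1 s' hs' h2)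

end Glue

section Assembly
open Finset

lemma ipKK : ip (Kcls 8) (Kcls 8) = 1 := by decide

lemma weyl_root {g : Cls 8 ≃ₗ[ℤ] Cls 8} (hg : IsWeyl g) {t : Cls 8} (ht : IsRoot t) :
    IsRoot (g t) := by
  constructor
  · rw [hg.1]; exact ht.1
  · rw [← hg.2, hg.1]; exact ht.2

lemma weyl_symm_ip {g : Cls 8 ≃ₗ[ℤ] Cls 8} (hg : IsWeyl g) (x y : Cls 8) :
    ip (g.symm x) y = ip x (g y) := by
  have h := hg.1 (g.symm x) y
  rw [g.apply_symm_apply] at h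
  exact h.symm

lemma root_of_minusOne {M : Cls 8} (h : IsMinusOne M) : IsRoot (M + Kcls 8) := by
  have h1 := h.1
  have h2 := h.2
  have hMK : ip M (Kcls 8) = -1 := by rw [ip_comm]; exact h2
  constructor
  · simp only [ip_add_left, ip_add_right]
    rw [hMK, h2, h1, ipKK]; ring
  · rw [ip_add_right, h2, ipKK]; ring

lemma minusOne_of_root {v : Cls 8} (h : IsRoot v) : IsMinusOne (v - Kcls 8) := by
  have hvK : ip v (Kcls 8) = 0 := by rw [ip_comm]; exact h.2
  constructor
  · simp only [ip_sub_left, ip_sub_right]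
    rw [hvK, h.2, h.1, ipKK]; ring
  · rw [ip_sub_right, h.2, ipKK]; ring

lemma ip_corr {M L : Cls 8} (hM : IsMinusOne M) (hL : IsMinusOne L) :
    ip (M + Kcls 8) (L + Kcls 8) = ip M L - 1 := by
  have hMK : ip M (Kcls 8) = -1 := by rw [ip_comm]; exact hM.2
  simp only [ip_add_left, ip_add_right]
  rw [hMK, hL.2, ipKK]; ring

/-- Part 3: the range of intersection numbers. -/
lemma part3 {L M : Cls 8} (hL : IsMinusOne L) (hM : IsMinusOne M) :
    ip M L ∈ ({-1, 0, 1, 2, 3} : Set ℤ) := by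
  have hMr := root_of_minusOne hM
  have hLr := root_of_minusOne hL
  have hcorr := ip_corr hM hL
  set M0 := M + Kcls 8 with hM0
  set L0 := L + Kcls 8 with hL0
  have hKv : ∀ v w : Cls 8, IsRoot v → IsRoot w → ip (Kcls 8) (v - w) = 0 := by
    intro v w hv hw; rw [ip_sub_right, hv.2, hw.2]; ring
  have hKv' : ∀ v w : Cls 8, IsRoot v → IsRoot w → ip (Kcls 8) (v + w) = 0 := by
    intro v w hv hw; rw [ip_add_right, hv.2, hw.2]; ring
  have hd := negdef (M0 - L0) (hKv _ _ hMr hLr)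
  have hs := negdef (M0 + L0) (hKv' _ _ hMr hLr)
  have e1 : ip (M0 - L0) (M0 - L0) = -4 - 2 * ip M0 L0 := by
    simp only [ip_sub_left, ip_sub_right]
    rw [hMr.1, hLr.1, ip_comm L0 M0]; ring
  have e2 : ip (M0 + L0) (M0 + L0) = -4 + 2 * ip M0 L0 := by
    simp only [ip_add_left, ip_add_right]
    rw [hMr.1, hLr.1, ip_comm L0 M0]; ring
  rw [e1] at hd
  rw [e2] at hs
  have b1 : -2 ≤ ip M0 L0 := by nlinarith [sq_nonneg (M0 - L0).1]
  have b2 : ip M0 L0 ≤ 2 := by nlinarith [sq_nonneg (M0 + L0).1]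
  have hteq : ip M L = ip M0 L0 + 1 := by linarith [hcorr]
  simp only [Set.mem_insert_iff, Set.mem_singleton_iff]
  omega

end Assembly

section Main
open Finset

variable {L : Cls 8}

/-- rigidity for the extreme values -/
lemma extreme_m1 {M : Cls 8} (hL : IsMinusOne L) (hM : IsMinusOne M)
    (h : ip M L = -1) : M = L := by
  have hMr := root_of_minusOne hM
  have hLr := root_of_minusOne hL
  have hcorr := ip_corr hM hL
  have hK : ip (Kcls 8) (M + Kcls 8 - (L + Kcls 8)) = 0 := by
    rw [ip_sub_right, hMr.2, hLr.2]; ring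
  have e1 : ip (M + Kcls 8 - (L + Kcls 8)) (M + Kcls 8 - (L + Kcls 8)) = 0 := by
    simp only [ip_sub_left, ip_sub_right]
    rw [hMr.1, hLr.1, ip_comm (L + Kcls 8) (M + Kcls 8), hcorr, h]
    ring
  have := negdef_zero _ hK e1
  have : M + Kcls 8 = L + Kcls 8 := by
    have h0 := sub_eq_zero.mp this
    exact h0
  exact add_right_cancel this

lemma extreme_p3 {M : Cls 8} (hL : IsMinusOne L) (hM : IsMinusOne M)
    (h : ip M L = 3) : M = -L - 2 • Kcls 8 := by
  have hMr := root_of_minusOne hM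
  have hLr := root_of_minusOne hL
  have hcorr := ip_corr hM hL
  have hK : ip (Kcls 8) (M + Kcls 8 + (L + Kcls 8)) = 0 := by
    rw [ip_add_right, hMr.2, hLr.2]; ring
  have c1 : ip M (Kcls 8) = -1 := by rw [ip_comm]; exact hM.2
  have c2 : ip L (Kcls 8) = -1 := by rw [ip_comm]; exact hL.2
  have c3 : ip L M = 3 := by rw [ip_comm]; exact h
  have e1 : ip (M + Kcls 8 + (L + Kcls 8)) (M + Kcls 8 + (L + Kcls 8)) = 0 := by
    simp only [ip_add_left, ip_add_right]
    rw [hM.1, hL.1, hM.2, hL.2, c1, c2, c3, h, ipKK]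
    ring
  have h0 := negdef_zero _ hK e1
  apply eq_of_sub_eq_zero
  have e2 : M - (-L - 2 • Kcls 8) = M + Kcls 8 + (L + Kcls 8) := by
    rw [two_smul]; abel
  rw [e2]
  exact h0

/-- Part 2, hard direction. -/
lemma part2_rev {M M' : Cls 8} (hL : IsMinusOne L) (hM : IsMinusOne M) (hM' : IsMinusOne M')
    (h : ip M L = ip M' L) :
    ∃ g : Cls 8 ≃ₗ[ℤ] Cls 8, IsWeyl g ∧ g L = L ∧ g M = M' := by
  have hrange := part3 hL hM
  simp only [Set.mem_insert_iff, Set.mem_singleton_iff] at hrange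
  -- extremes
  rcases eq_or_ne (ip M L) (-1) with he | hne1
  · have e1 : M = L := extreme_m1 hL hM he
    have e2 : M' = L := extreme_m1 hL hM' (h ▸ he)
    exact ⟨LinearEquiv.refl ℤ (Cls 8), weyl_id, by simp, by simp [e1, e2]⟩
  rcases eq_or_ne (ip M L) 3 with he | hne3
  · have e1 := extreme_p3 hL hM he
    have e2 := extreme_p3 hL hM' (h ▸ he)
    exact ⟨LinearEquiv.refl ℤ (Cls 8), weyl_id, by simp, by simp [e1, e2]⟩
  -- middle values
  have hc : ip M L - 1 = -1 ∨ ip M L - 1 = 0 ∨ ip M L - 1 = 1 := by omega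
  have hLr := root_of_minusOne hL
  have hMr := root_of_minusOne hM
  have hMr' := root_of_minusOne hM'
  obtain ⟨hw, hwW, hwL⟩ := trans_root (L + Kcls 8) hLr
  have hsr : IsRoot (hw (M + Kcls 8)) := weyl_root hwW hMr
  have hsr' : IsRoot (hw (M' + Kcls 8)) := weyl_root hwW hMr'
  have hip1 : ip (hw (M + Kcls 8)) r0 = ip M L - 1 := by
    rw [← hwL, hwW.1, ip_corr hM hL]
  have hip2 : ip (hw (M' + Kcls 8)) r0 = ip M L - 1 := by
    rw [← hwL, hwW.1, ip_corr hM' hL, h]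
  obtain ⟨w2, hw2W, hw2r, hw2s⟩ :=
    stab_trans (ip M L - 1) hc _ _ hsr hsr' hip1 hip2
  -- g = hw.symm ∘ w2 ∘ hw
  have e1 : hw L + Kcls 8 = r0 := by rw [← hwL, map_add, hwW.2]
  refine ⟨(hw.trans w2).trans hw.symm, weyl_trans (weyl_trans hwW hw2W) (weyl_symm hwW), ?_, ?_⟩
  · simp only [LinearEquiv.trans_apply]
    rw [LinearEquiv.symm_apply_eq]
    calc w2 (hw L) = w2 (hw L + Kcls 8) - Kcls 8 := by rw [map_add, hw2W.2]; abel
      _ = r0 - Kcls 8 := by rw [e1, hw2r]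
      _ = hw L := by rw [← e1]; abel
  · simp only [LinearEquiv.trans_apply]
    rw [LinearEquiv.symm_apply_eq]
    have f1 : hw (M + Kcls 8) = hw M + Kcls 8 := by rw [map_add, hwW.2]
    have f2 : hw (M' + Kcls 8) = hw M' + Kcls 8 := by rw [map_add, hwW.2]
    have h3 := hw2s
    rw [f1, f2, map_add, hw2W.2] at h3
    exact add_right_cancel h3

end Main

section Part4
open Finset

lemma ip_comb2 (α β : ℤ) (x y z : Cls 8) : ip (α•x + β•y) z = α * ip x z + β * ip y z := by
  rw [ip_add_left, ip_smul_left, ip_smul_left]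

lemma ip_comb2r (α β : ℤ) (x y z : Cls 8) : ip z (α•x + β•y) = α * ip z x + β * ip z y := by
  rw [ip_comm, ip_comb2, ip_comm x z, ip_comm y z]

lemma root_bases : IsRoot base_m1 ∧ IsRoot base_z0 ∧ IsRoot base_p1 := by decide

lemma part4 {L : Cls 8} (hL : IsMinusOne L) :
    ∀ k ∈ ({-1, 0, 1, 2, 3} : Set ℤ), ∃ M : Cls 8, IsMinusOne M ∧ ip M L = k := by
  have hmid : ∀ c : ℤ, ∀ u : Cls 8, IsRoot u → ip u r0 = c →
      ∃ M : Cls 8, IsMinusOne M ∧ ip M L = c + 1 := by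
    intro c u hu huc
    obtain ⟨hw, hwW, hwL⟩ := trans_root (L + Kcls 8) (root_of_minusOne hL)
    have hv : IsRoot (hw.symm u) := weyl_root (weyl_symm hwW) hu
    refine ⟨hw.symm u - Kcls 8, minusOne_of_root hv, ?_⟩
    have e1 : hw L + Kcls 8 = r0 := by rw [← hwL, map_add, hwW.2]
    have e2 : ip (hw.symm u) L = c := by
      rw [weyl_symm_ip hwW]
      have : hw L = r0 - Kcls 8 := by rw [← e1]; abel
      rw [this, ip_sub_right, huc]
      have : ip u (Kcls 8) = 0 := by rw [ip_comm]; exact hu.2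
      rw [this]; ring
    rw [ip_sub_left, e2, hL.2]
    ring
  intro k hk
  simp only [Set.mem_insert_iff, Set.mem_singleton_iff] at hk
  rcases hk with rfl | rfl | rfl | rfl | rfl
  · exact ⟨L, hL, hL.1⟩
  · exact (by simpa using hmid (-1) base_m1 root_bases.1 base_ip.1)
  · exact (by simpa using hmid 0 base_z0 root_bases.2.1 base_ip.2.1)
  · exact (by simpa using hmid 1 base_p1 root_bases.2.2 base_ip.2.2)
  · -- k = 3 : M = -L - 2 • K
    have hKM : ip (Kcls 8) ((-1 : ℤ)•L + (-2 : ℤ)•Kcls 8) = -1 := by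
      rw [ip_comb2r, hL.2, ipKK]; ring
    have hLM : ip L ((-1 : ℤ)•L + (-2 : ℤ)•Kcls 8) = 3 := by
      rw [ip_comb2r, hL.1, ip_comm L (Kcls 8), hL.2]; ring
    refine ⟨(-1 : ℤ)•L + (-2 : ℤ)•Kcls 8, ⟨?_, hKM⟩, ?_⟩
    · rw [ip_comb2, hLM, hKM]; ring
    · rw [ip_comb2, hL.1, hL.2]; ring

end Part4


end DP


open DP in
/-- The stabilizer of a (−1)-class L in W₈ acts on the set of (−1)-classes
with exactly five orbits, the orbits being distinguished by the intersection
number with L, which takes exactly the values −1, 0, 1, 2, 3. -/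
theorem stmt11 (L : Cls 8) (hL : IsMinusOne L) :
    Nat.card (Quot (fun M M' : {M : Cls 8 // IsMinusOne M} =>
      ∃ g : Cls 8 ≃ₗ[ℤ] Cls 8, IsWeyl g ∧ g L = L ∧ g M.1 = M'.1)) = 5 ∧
    (∀ M M' : {M : Cls 8 // IsMinusOne M},
      (∃ g : Cls 8 ≃ₗ[ℤ] Cls 8, IsWeyl g ∧ g L = L ∧ g M.1 = M'.1) ↔
        ip M.1 L = ip M'.1 L) ∧
    (∀ M : Cls 8, IsMinusOne M → ip M L ∈ ({-1, 0, 1, 2, 3} : Set ℤ)) ∧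
    (∀ k ∈ ({-1, 0, 1, 2, 3} : Set ℤ), ∃ M : Cls 8, IsMinusOne M ∧ ip M L = k) := by
  have hpart2 : ∀ M M' : {M : Cls 8 // IsMinusOne M},
      (∃ g : Cls 8 ≃ₗ[ℤ] Cls 8, IsWeyl g ∧ g L = L ∧ g M.1 = M'.1) ↔
        ip M.1 L = ip M'.1 L := by
    intro M M'
    constructor
    · rintro ⟨g, hgW, hgL, hgM⟩
      have hp := hgW.1 M.1 L
      rw [hgL, hgM] at hp
      exact hp.symm
    · intro h
      exact part2_rev hL M.2 M'.2 h
  refine ⟨?_, hpart2, fun M hM => part3 hL hM, part4 hL⟩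
  have e : (Quot (fun M M' : {M : Cls 8 // IsMinusOne M} =>
      ∃ g : Cls 8 ≃ₗ[ℤ] Cls 8, IsWeyl g ∧ g L = L ∧ g M.1 = M'.1)) ≃
      ({-1, 0, 1, 2, 3} : Set ℤ) := by
    have hch : ∀ k : ({-1, 0, 1, 2, 3} : Set ℤ),
        ∃ M : {M : Cls 8 // IsMinusOne M}, ip M.1 L = (k : ℤ) := by
      intro k
      obtain ⟨M, hM, hMk⟩ := part4 hL k.1 k.2
      exact ⟨⟨M, hM⟩, hMk⟩
    refine
      { toFun := Quot.lift (fun M => (⟨ip M.1 L, part3 hL M.2⟩ : ({-1, 0, 1, 2, 3} : Set ℤ)))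
          (fun M M' hr => Subtype.ext ((hpart2 M M').1 hr))
        invFun := fun k => Quot.mk _ (hch k).choose
        left_inv := ?_
        right_inv := ?_ }
    · intro q
      refine Quot.inductionOn q (fun M => ?_)
      exact Quot.sound ((hpart2 _ M).2 (hch _).choose_spec)
    · intro k
      exact Subtype.ext (hch k).choose_spec
  rw [Nat.card_congr e]
  have hset : ({-1, 0, 1, 2, 3} : Set ℤ) = (({-1, 0, 1, 2, 3} : Finset ℤ) : Set ℤ) := by
    ext x; simp
  rw [hset, Nat.card_coe_set_eq, Set.ncard_coe_finset]
  decide
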